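/- Let U ⊆ ℝ × ℝ³ be open and let ρ : U → ℝ and u : U → ℝ³ be twice continuously differentiable and satisfy the continuity equation ∂_t ρ + div(ρ u) = 0 at every point of U. Let p ∈ ℝ with 2 ≤ p ≤ 6 and let (t,x) ∈ U be a point at which the spatial gradient ∇ρ(t,x) ≠ 0. Then at (t,x): ∂_t(|∇ρ|^p) + div(|∇ρ|^p u) + (p−1) |∇ρ|^p div u + p |∇ρ|^{p−2} ∑_{i,j=1}^{3} ∂_i ρ · ∂_i u^j · ∂_j ρ + p ρ |∇ρ|^{p−2} ⟨∇ρ, ∇(div u)⟩ = 0. -/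

import Mathlib

noncomputable section

/-- ℝ³, realized as `Fin 3 → ℝ`. -/
abbrev V3 : Type := Fin 3 → ℝ

/-- Spatial partial derivative `∂ᵢ f (t, x)` of a time-dependent scalar field. -/
def spd (i : Fin 3) (f : ℝ × V3 → ℝ) (t : ℝ) (x : V3) : ℝ :=
  fderiv ℝ (fun y => f (t, y)) x (Pi.single i 1)

/-- Spatial gradient `∇f (t, x)` of a time-dependent scalar field. -/
def spgrad (f : ℝ × V3 → ℝ) (t : ℝ) (x : V3) : V3 := fun i => spd i f t x

/-- Spatial partial derivative `∂ᵢ v (t, x)` of a time-dependent vector field. -/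
def spdv (i : Fin 3) (v : ℝ × V3 → V3) (t : ℝ) (x : V3) : V3 :=
  fderiv ℝ (fun y => v (t, y)) x (Pi.single i 1)

/-- Spatial divergence `div v (t, x)` of a time-dependent vector field. -/
def spdiv (v : ℝ × V3 → V3) (t : ℝ) (x : V3) : ℝ := ∑ i, spdv i v t x i

/-- Spatial curl `curl v (t, x)` of a time-dependent vector field (0-based indices). -/
def spcurl (v : ℝ × V3 → V3) (t : ℝ) (x : V3) : V3 :=
  ![spdv 1 v t x 2 - spdv 2 v t x 1,
    spdv 2 v t x 0 - spdv 0 v t x 2,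
    spdv 0 v t x 1 - spdv 1 v t x 0]

/-- Time derivative `∂ₜ f (t, x)` of a time-dependent scalar field. -/
def pdt (f : ℝ × V3 → ℝ) (t : ℝ) (x : V3) : ℝ := deriv (fun s => f (s, x)) t

/-- Time derivative `∂ₜ v (t, x)` of a time-dependent vector field. -/
def pdtv (v : ℝ × V3 → V3) (t : ℝ) (x : V3) : V3 := deriv (fun s => v (s, x)) t

/-- Cross product in ℝ³. -/
def cross3 (a b : V3) : V3 :=
  ![a 1 * b 2 - a 2 * b 1, a 2 * b 0 - a 0 * b 2, a 0 * b 1 - a 1 * b 0]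


/-- Euclidean norm on ℝ³. -/
def norm3 (v : V3) : ℝ := Real.sqrt (∑ i, (v i) ^ 2)

/-- spatial basis directions in `ℝ × V3` -/
def e3 (i : Fin 3) : ℝ × V3 := (0, Pi.single i 1)

/-- time direction in `ℝ × V3` -/
def eT3 : ℝ × V3 := (1, 0)

lemma spd_eq {f : ℝ × V3 → ℝ} {L : (ℝ × V3) →L[ℝ] ℝ} {t : ℝ} {x : V3}
    (hf : HasFDerivAt f L (t, x)) (i : Fin 3) :
    spd i f t x = L (e3 i) := by
  have h : HasFDerivAt (fun y => f (t, y)) (L.comp (ContinuousLinearMap.inr ℝ ℝ V3)) x :=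
    hf.comp x (hasFDerivAt_prodMk_right t x)
  rw [spd, h.fderiv]; rfl

lemma pdt_eq {f : ℝ × V3 → ℝ} {L : (ℝ × V3) →L[ℝ] ℝ} {t : ℝ} {x : V3}
    (hf : HasFDerivAt f L (t, x)) :
    pdt f t x = L eT3 := by
  have h : HasFDerivAt (fun s => f (s, x)) (L.comp (ContinuousLinearMap.inl ℝ ℝ V3)) t :=
    hf.comp t (hasFDerivAt_prodMk_left t x)
  rw [pdt, h.hasDerivAt.deriv]; rfl

lemma spdv_eq {v : ℝ × V3 → V3} {L : (ℝ × V3) →L[ℝ] V3} {t : ℝ} {x : V3}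
    (hf : HasFDerivAt v L (t, x)) (i : Fin 3) :
    spdv i v t x = L (e3 i) := by
  have h : HasFDerivAt (fun y => v (t, y)) (L.comp (ContinuousLinearMap.inr ℝ ℝ V3)) x :=
    hf.comp x (hasFDerivAt_prodMk_right t x)
  rw [spdv, h.fderiv]; rfl

lemma spdiv_eq {v : ℝ × V3 → V3} {L : (ℝ × V3) →L[ℝ] V3} {t : ℝ} {x : V3}
    (hf : HasFDerivAt v L (t, x)) :
    spdiv v t x = ∑ i, L (e3 i) i := by
  unfold spdiv
  exact Finset.sum_congr rfl fun i _ => by rw [spdv_eq hf i]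

set_option maxHeartbeats 4000000 in
/-- The transport equation satisfied by `|∇ρ|^p` when `ρ, u` satisfy the continuity
equation: at any point where `∇ρ ≠ 0`,
`∂ₜ(|∇ρ|^p) + div (|∇ρ|^p u) + (p−1)|∇ρ|^p div u
  + p |∇ρ|^{p−2} (∇ρ)* ∇u (∇ρ) + p ρ |∇ρ|^{p−2} ⟨∇ρ, ∇(div u)⟩ = 0`. -/
theorem grad_density_transport_equation
    (U : Set (ℝ × V3)) (hU : IsOpen U)
    (ρ : ℝ × V3 → ℝ) (u : ℝ × V3 → V3)
    (hρ : ContDiffOn ℝ 2 ρ U) (hu : ContDiffOn ℝ 2 u U)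
    -- continuity equation `∂ₜρ + div (ρ u) = 0` on `U`
    (hcont : ∀ p ∈ U, pdt ρ p.1 p.2 + spdiv (fun q => ρ q • u q) p.1 p.2 = 0)
    (p : ℝ) (hp2 : 2 ≤ p) (hp6 : p ≤ 6)
    (t : ℝ) (x : V3) (hmem : (t, x) ∈ U)
    (hgrad : spgrad ρ t x ≠ 0) :
    pdt (fun q => norm3 (spgrad ρ q.1 q.2) ^ p) t x
      + spdiv (fun q => (norm3 (spgrad ρ q.1 q.2) ^ p) • u q) t x
      + (p - 1) * norm3 (spgrad ρ t x) ^ p * spdiv u t x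
      + p * norm3 (spgrad ρ t x) ^ (p - 2)
          * (∑ i, ∑ j, spgrad ρ t x i * spdv i u t x j * spgrad ρ t x j)
      + p * ρ (t, x) * norm3 (spgrad ρ t x) ^ (p - 2)
          * (∑ i, spgrad ρ t x i * spd i (fun q => spdiv u q.1 q.2) t x) = 0 := by
  classical
  set a : ℝ × V3 := (t, x) with ha
  have hUn : U ∈ nhds a := hU.mem_nhds hmem
  have hρa : ContDiffAt ℝ 2 ρ a := hρ.contDiffAt hUn
  have hua : ContDiffAt ℝ 2 u a := hu.contDiffAt hUn
  have hρd : ∀ᶠ q in nhds a, DifferentiableAt ℝ ρ q := by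
    filter_upwards [hU.eventually_mem hmem] with q hq
    exact (hρ.contDiffAt (hU.mem_nhds hq)).differentiableAt two_ne_zero
  have hud : ∀ᶠ q in nhds a, DifferentiableAt ℝ u q := by
    filter_upwards [hU.eventually_mem hmem] with q hq
    exact (hu.contDiffAt (hU.mem_nhds hq)).differentiableAt two_ne_zero
  set Lρ : (ℝ × V3) →L[ℝ] ℝ := fderiv ℝ ρ a with hLρdef
  have hLρ : HasFDerivAt ρ Lρ a := (hρa.differentiableAt two_ne_zero).hasFDerivAt
  set Lu : (ℝ × V3) →L[ℝ] V3 := fderiv ℝ u a with hLudef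
  have hLu : HasFDerivAt u Lu a := (hua.differentiableAt two_ne_zero).hasFDerivAt
  -- second derivative of ρ and its symmetry
  have hΦc : ContDiffAt ℝ 1 (fderiv ℝ ρ) a := hρa.fderiv_right (by norm_num)
  set Φ : (ℝ × V3) →L[ℝ] (ℝ × V3) →L[ℝ] ℝ := fderiv ℝ (fderiv ℝ ρ) a with hΦdef
  have hΦ : HasFDerivAt (fderiv ℝ ρ) Φ a := (hΦc.differentiableAt one_ne_zero).hasFDerivAt
  have hsymm : ∀ v w, Φ v w = Φ w v := fun v w =>
    second_derivative_symmetric_of_eventually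
      (by filter_upwards [hρd] with q hq; exact hq.hasFDerivAt) hΦ v w
  -- components of u
  set uc : Fin 3 → (ℝ × V3 → ℝ) := fun j q => u q j with huc
  have hucd : ∀ j, ContDiffAt ℝ 2 (uc j) a := fun j =>
    (ContinuousLinearMap.proj j : V3 →L[ℝ] ℝ).contDiff.comp_contDiffAt a hua
  set Ψ : Fin 3 → (ℝ × V3) →L[ℝ] (ℝ × V3) →L[ℝ] ℝ :=
    fun j => fderiv ℝ (fderiv ℝ (uc j)) a with hΨdef
  have hΨ : ∀ j, HasFDerivAt (fderiv ℝ (uc j)) (Ψ j) a := fun j =>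
    ((((hucd j).fderiv_right (by norm_num)).differentiableAt one_ne_zero)).hasFDerivAt
  set Luj : Fin 3 → (ℝ × V3) →L[ℝ] ℝ := fun j => fderiv ℝ (uc j) a with hLujdef
  have hLuj : ∀ j, HasFDerivAt (uc j) (Luj j) a := fun j =>
    ((hucd j).differentiableAt two_ne_zero).hasFDerivAt
  have hLujLu : ∀ j w, Luj j w = Lu w j := by
    intro j w
    have h1 : HasFDerivAt (uc j)
        ((ContinuousLinearMap.proj j : V3 →L[ℝ] ℝ).comp Lu) a :=
      (ContinuousLinearMap.proj j : V3 →L[ℝ] ℝ).hasFDerivAt.comp a hLu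
    rw [(hLuj j).unique h1]; rfl
  -- derivatives of gradient components
  have hgr : ∀ w : ℝ × V3,
      HasFDerivAt (fun q => fderiv ℝ ρ q w)
        ((ContinuousLinearMap.apply ℝ ℝ w).comp Φ) a := fun w =>
    (ContinuousLinearMap.apply ℝ ℝ w).hasFDerivAt.comp a hΦ
  have hgru : ∀ j, ∀ w : ℝ × V3,
      HasFDerivAt (fun q => fderiv ℝ (uc j) q w)
        ((ContinuousLinearMap.apply ℝ ℝ w).comp (Ψ j)) a := fun j w =>
    (ContinuousLinearMap.apply ℝ ℝ w).hasFDerivAt.comp a (hΨ j)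
  -- gradient components at a
  have hgx : ∀ i, spgrad ρ t x i = Lρ (e3 i) := fun i => spd_eq hLρ i
  -- squared norm function
  set S : ℝ × V3 → ℝ := fun q => ∑ i, fderiv ℝ ρ q (e3 i) * fderiv ℝ ρ q (e3 i) with hSdef
  set LS : (ℝ × V3) →L[ℝ] ℝ :=
    ∑ i, (Lρ (e3 i) • ((ContinuousLinearMap.apply ℝ ℝ (e3 i)).comp Φ)
      + Lρ (e3 i) • ((ContinuousLinearMap.apply ℝ ℝ (e3 i)).comp Φ)) with hLS
  have hS : HasFDerivAt S LS a :=
    HasFDerivAt.fun_sum fun i _ => (hgr (e3 i)).fun_mul (hgr (e3 i))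
  have hSa : S a = ∑ i, Lρ (e3 i) * Lρ (e3 i) := rfl
  have hSapos : 0 < S a := by
    rw [hSa]
    obtain ⟨i, hi⟩ : ∃ i, Lρ (e3 i) ≠ 0 := by
      by_contra h
      push_neg at h
      exact hgrad (funext fun i => by rw [show spgrad ρ t x i = Lρ (e3 i) from hgx i, h i]; rfl)
    exact Finset.sum_pos' (fun i _ => mul_self_nonneg _)
      ⟨i, Finset.mem_univ i, mul_self_pos.mpr hi⟩
  set N : ℝ := Real.sqrt (S a) with hNdef
  have hN : 0 < N := Real.sqrt_pos.mpr hSapos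
  have hNN : N * N = ∑ i, Lρ (e3 i) * Lρ (e3 i) := by
    rw [← hSa, hNdef]; exact Real.mul_self_sqrt hSapos.le
  -- eventual equality of the norm function
  have hnorm_ev : ∀ᶠ q in nhds a, norm3 (spgrad ρ q.1 q.2) = Real.sqrt (S q) := by
    filter_upwards [hρd] with q hq
    have hsp : spgrad ρ q.1 q.2 = fun i => fderiv ℝ ρ q (e3 i) := by
      funext i
      exact spd_eq (t := q.1) (x := q.2) hq.hasFDerivAt i
    rw [hsp]
    simp only [norm3, hSdef, pow_two]
  -- derivative of (√S)^p
  have hsqrt : HasFDerivAt (fun q => Real.sqrt (S q)) ((1 / (2 * N)) • LS) a :=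
    (Real.hasDerivAt_sqrt hSapos.ne').comp_hasFDerivAt a hS
  set Lnp : (ℝ × V3) →L[ℝ] ℝ := (p * N ^ (p - 1)) • ((1 / (2 * N)) • LS) with hLnpdef
  have hnp : HasFDerivAt (fun q => Real.sqrt (S q) ^ p) Lnp a :=
    by exact (Real.hasDerivAt_rpow_const (p := p) (Or.inl hN.ne')).comp_hasFDerivAt a hsqrt
  have hnp' : HasFDerivAt (fun q => norm3 (spgrad ρ q.1 q.2) ^ p) Lnp a :=
    hnp.congr_of_eventuallyEq (by filter_upwards [hnorm_ev] with q hq; rw [hq])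
  have hLnp' : ∀ w, Lnp w = p * N ^ (p - 2) * ∑ i, Lρ (e3 i) * Φ w (e3 i) := by
    intro w
    have hexp : N ^ (p - 2) = N ^ (p - 1) / N := by
      rw [show p - 2 = (p - 1) - 1 by ring, Real.rpow_sub hN, Real.rpow_one]
    have hLSw : LS w = ∑ i, (Lρ (e3 i) * Φ w (e3 i) + Lρ (e3 i) * Φ w (e3 i)) := by
      rw [hLS]
      simp [ContinuousLinearMap.sum_apply, ContinuousLinearMap.smul_apply,
        ContinuousLinearMap.comp_apply, ContinuousLinearMap.apply_apply, smul_eq_mul]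
    rw [hLnpdef]
    simp only [ContinuousLinearMap.smul_apply, smul_eq_mul]
    rw [hLSw, hexp, Finset.sum_add_distrib]
    field_simp
    ring
  -- derivative of |∇ρ|^p • u
  have hv2 : HasFDerivAt (fun q => norm3 (spgrad ρ q.1 q.2) ^ p • u q)
      ((N ^ p) • Lu + Lnp.smulRight (u a)) a := by
    refine HasFDerivAt.congr_of_eventuallyEq (hnp.fun_smul hLu) ?_
    filter_upwards [hnorm_ev] with q hq
    rw [hq]
  -- derivative of spatial divergence of u
  have hDvu : HasFDerivAt (fun q => spdiv u q.1 q.2)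
      (∑ j, (ContinuousLinearMap.apply ℝ ℝ (e3 j)).comp (Ψ j)) a := by
    refine HasFDerivAt.congr_of_eventuallyEq
      (HasFDerivAt.fun_sum fun j _ => hgru j (e3 j)) ?_
    filter_upwards [hU.eventually_mem hmem] with q hq
    have huq : DifferentiableAt ℝ u q :=
      (hu.contDiffAt (hU.mem_nhds hq)).differentiableAt two_ne_zero
    have h2 : spdiv u q.1 q.2 = ∑ j, fderiv ℝ u q (e3 j) j :=
      spdiv_eq (t := q.1) (x := q.2) huq.hasFDerivAt
    rw [h2]
    refine Finset.sum_congr rfl fun j _ => ?_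
    have h1 : HasFDerivAt (uc j)
        ((ContinuousLinearMap.proj j : V3 →L[ℝ] ℝ).comp (fderiv ℝ u q)) q :=
      (ContinuousLinearMap.proj j : V3 →L[ℝ] ℝ).hasFDerivAt.comp q huq.hasFDerivAt
    rw [h1.fderiv]; rfl
  -- the continuity equation, spatially differentiated
  set C : ℝ × V3 → ℝ := fun q => fderiv ℝ ρ q eT3
    + ∑ j, (ρ q * fderiv ℝ (uc j) q (e3 j) + fderiv ℝ ρ q (e3 j) * uc j q) with hCdef
  have hC0 : C =ᶠ[nhds a] (fun _ => (0 : ℝ)) := by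
    filter_upwards [hU.eventually_mem hmem] with q hq
    have hρq : DifferentiableAt ℝ ρ q :=
      (hρ.contDiffAt (hU.mem_nhds hq)).differentiableAt two_ne_zero
    have huq : DifferentiableAt ℝ u q :=
      (hu.contDiffAt (hU.mem_nhds hq)).differentiableAt two_ne_zero
    have hsm : HasFDerivAt (fun q' => ρ q' • u q')
        (ρ q • fderiv ℝ u q + (fderiv ℝ ρ q).smulRight (u q)) q :=
      hρq.hasFDerivAt.smul huq.hasFDerivAt
    have h1 : pdt ρ q.1 q.2 = fderiv ℝ ρ q eT3 :=
      pdt_eq (t := q.1) (x := q.2) hρq.hasFDerivAt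
    have h2 : spdiv (fun q' => ρ q' • u q') q.1 q.2
        = ∑ i, (ρ q • fderiv ℝ u q + (fderiv ℝ ρ q).smulRight (u q)) (e3 i) i :=
      spdiv_eq (t := q.1) (x := q.2) hsm
    have h3 : ∀ j : Fin 3, fderiv ℝ (uc j) q (e3 j) = fderiv ℝ u q (e3 j) j := by
      intro j
      have h1 : HasFDerivAt (uc j)
          ((ContinuousLinearMap.proj j : V3 →L[ℝ] ℝ).comp (fderiv ℝ u q)) q :=
        (ContinuousLinearMap.proj j : V3 →L[ℝ] ℝ).hasFDerivAt.comp q huq.hasFDerivAt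
      rw [h1.fderiv]; rfl
    have hc := hcont q hq
    rw [h1, h2] at hc
    have : C q = fderiv ℝ ρ q eT3
        + ∑ i, (ρ q • fderiv ℝ u q + (fderiv ℝ ρ q).smulRight (u q)) (e3 i) i := by
      rw [hCdef]
      simp only []
      congr 1
      refine Finset.sum_congr rfl fun i _ => ?_
      rw [h3 i]
      simp [ContinuousLinearMap.add_apply, ContinuousLinearMap.smulRight_apply,
        ContinuousLinearMap.smul_apply, Pi.add_apply, Pi.smul_apply, smul_eq_mul, huc]
    rw [this, hc]
  have hLC : HasFDerivAt C
      (((ContinuousLinearMap.apply ℝ ℝ eT3).comp Φ)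
        + ∑ j, ((ρ a • ((ContinuousLinearMap.apply ℝ ℝ (e3 j)).comp (Ψ j))
            + (Luj j (e3 j)) • Lρ)
          + ((Lρ (e3 j)) • Luj j
            + uc j a • ((ContinuousLinearMap.apply ℝ ℝ (e3 j)).comp Φ)))) a :=
    (hgr eT3).fun_add (HasFDerivAt.fun_sum fun j _ =>
      (hLρ.fun_mul (hgru j (e3 j))).fun_add ((hgr (e3 j)).fun_mul (hLuj j)))
  have hLCzero := (hLC.congr_of_eventuallyEq hC0.symm).unique (hasFDerivAt_const (0 : ℝ) a)
  have key : ∀ i : Fin 3,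
      Φ (e3 i) eT3 + ∑ j, (ρ a * Ψ j (e3 i) (e3 j) + Lu (e3 j) j * Lρ (e3 i)
        + Lρ (e3 j) * Lu (e3 i) j + u a j * Φ (e3 i) (e3 j)) = 0 := by
    intro i
    have h0 := congrArg (fun L : (ℝ × V3) →L[ℝ] ℝ => L (e3 i)) hLCzero
    simp only [ContinuousLinearMap.add_apply, ContinuousLinearMap.coe_sum',
      Finset.sum_apply, ContinuousLinearMap.coe_comp', Function.comp_apply,
      ContinuousLinearMap.apply_apply, ContinuousLinearMap.coe_smul', Pi.smul_apply,
      smul_eq_mul, ContinuousLinearMap.smul_apply, ContinuousLinearMap.zero_apply,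
      hLujLu, huc] at h0
    rw [Fin.sum_univ_three] at h0 ⊢
    linear_combination h0
  -- norm at the point
  have hNg : norm3 (spgrad ρ t x) = N := by
    rw [hNdef, norm3]
    congr 1
    rw [hSa]
    exact Finset.sum_congr rfl fun i _ => by rw [hgx i, pow_two]
  -- rpow facts
  have hNp : N ^ p = N ^ (p - 2) * (N * N) := by
    have h2 : N ^ ((p - 2) + 2) = N ^ (p - 2) * N ^ (2 : ℝ) := Real.rpow_add hN _ _
    have h3 : N ^ (2 : ℝ) = N * N := by
      rw [show (2 : ℝ) = ((2 : ℕ) : ℝ) by norm_num, Real.rpow_natCast]; ring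
    rw [← h3, ← h2, show p - 2 + 2 = p from by ring]
  -- assemble
  rw [pdt_eq hnp', spdiv_eq hv2, spdiv_eq hLu, hNg]
  simp only [hgx, spdv_eq hLu, spd_eq hDvu]
  simp only [ContinuousLinearMap.add_apply, ContinuousLinearMap.smul_apply,
    ContinuousLinearMap.smulRight_apply, ContinuousLinearMap.coe_sum', Finset.sum_apply,
    ContinuousLinearMap.coe_comp', Function.comp_apply, ContinuousLinearMap.apply_apply,
    Pi.add_apply, Pi.smul_apply, smul_eq_mul, ContinuousLinearMap.coe_smul']
  simp only [hLnp']
  rw [Fin.sum_univ_three] at hNN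
  have k0 := key 0; have k1 := key 1; have k2 := key 2
  rw [Fin.sum_univ_three] at k0 k1 k2
  simp only [Fin.sum_univ_three]
  have hs01 := hsymm (e3 0) (e3 1)
  have hs02 := hsymm (e3 0) (e3 2)
  have hs12 := hsymm (e3 1) (e3 2)
  have hsT0 := hsymm eT3 (e3 0)
  have hsT1 := hsymm eT3 (e3 1)
  have hsT2 := hsymm eT3 (e3 2)
  linear_combination (p * N ^ (p - 2) * Lρ (e3 0)) * k0
    + (p * N ^ (p - 2) * Lρ (e3 1)) * k1
    + (p * N ^ (p - 2) * Lρ (e3 2)) * k2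
    + (p * (Lu (e3 0) 0 + Lu (e3 1) 1 + Lu (e3 2) 2)) * hNp
    + (p * (Lu (e3 0) 0 + Lu (e3 1) 1 + Lu (e3 2) 2) * N ^ (p - 2)) * hNN
    + (p * N ^ (p - 2) * Lρ (e3 0)) * hsT0
    + (p * N ^ (p - 2) * Lρ (e3 1)) * hsT1
    + (p * N ^ (p - 2) * Lρ (e3 2)) * hsT2
    + (p * N ^ (p - 2) * (u a 0 * Lρ (e3 1) - Lρ (e3 0) * u a 1)) * hs01
    + (p * N ^ (p - 2) * (u a 0 * Lρ (e3 2) - Lρ (e3 0) * u a 2)) * hs02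
    + (p * N ^ (p - 2) * (u a 1 * Lρ (e3 2) - Lρ (e3 1) * u a 2)) * hs12

end
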